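/- arXiv:2505.01169 — 5 statements merged into one kernel-verified Lean document; each statement's English description precedes it below -/
import Mathlib

section
/- Let d be a positive integer. Let φ^η and φ^θ be functions assigning to each pair (s,t) with 0 ≤ s ≤ t ≤ 1 a map from ℝ^d to ℝ^d. Assume φ^η satisfies the initial condition φ^η_{s,s}(x) = x for all s ∈ [0,1] and x ∈ ℝ^d, and the consistency property φ^η_{u,t}(φ^η_{s,u}(x)) = φ^η_{s,t}(x) for all 0 ≤ s ≤ u ≤ t ≤ 1 and x ∈ ℝ^d; assume φ^θ satisfies φ^θ_{s,s}(x) = x for all s ∈ [0,1] and x ∈ ℝ^d. Suppose there exists τ* > 0 such that for all x ∈ ℝ^d, all 0 ≤ s < t ≤ 1, and all τ with 0 < τ ≤ min{τ*, t−s}: (a) φ^θ_{s,s+τ}(x) = φ^η_{s,s+τ}(x), and (b) φ^θ_{s,t}(x) = φ^θ_{t−τ,t}(φ^θ_{s,t−τ}(x)). Then φ^θ_{s,t}(x) = φ^η_{s,t}(x) for all 0 ≤ s ≤ t ≤ 1 and all x ∈ ℝ^d. -/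
/-- Lemma 1 (consistency extension): if a two-timed flow model `φθ` agrees with the
implicit flow `φη` on all short intervals and satisfies the short-interval consistency
property, then it agrees with `φη` everywhere. -/
theorem stmt_0 (d : ℕ) (hd : 0 < d)
    (φη φθ : ℝ → ℝ → (Fin d → ℝ) → (Fin d → ℝ))
    (hη_init : ∀ s : ℝ, 0 ≤ s → s ≤ 1 → ∀ x, φη s s x = x)
    (hη_cons : ∀ s u t : ℝ, 0 ≤ s → s ≤ u → u ≤ t → t ≤ 1 → ∀ x,
      φη u t (φη s u x) = φη s t x)
    (hθ_init : ∀ s : ℝ, 0 ≤ s → s ≤ 1 → ∀ x, φθ s s x = x)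
    (τstar : ℝ) (hτstar : 0 < τstar)
    (ha : ∀ (x : Fin d → ℝ) (s t τ : ℝ), 0 ≤ s → s < t → t ≤ 1 →
      0 < τ → τ ≤ min τstar (t - s) → φθ s (s + τ) x = φη s (s + τ) x)
    (hb : ∀ (x : Fin d → ℝ) (s t τ : ℝ), 0 ≤ s → s < t → t ≤ 1 →
      0 < τ → τ ≤ min τstar (t - s) → φθ s t x = φθ (t - τ) t (φθ s (t - τ) x)) :
    ∀ (s t : ℝ), 0 ≤ s → s ≤ t → t ≤ 1 → ∀ x : Fin d → ℝ, φθ s t x = φη s t x := by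
  -- Induction on n with t - s ≤ n * τstar
  suffices H : ∀ n : ℕ, ∀ s t : ℝ, 0 ≤ s → s ≤ t → t ≤ 1 → t - s ≤ n * τstar →
      ∀ x : Fin d → ℝ, φθ s t x = φη s t x by
    intro s t hs hst ht1 x
    obtain ⟨n, hn⟩ := exists_nat_ge ((t - s) / τstar)
    refine H n s t hs hst ht1 ?_ x
    calc t - s = (t - s) / τstar * τstar := by field_simp
    _ ≤ n * τstar := by nlinarith
  intro n
  induction n with
  | zero =>
    intro s t hs hst ht1 hle x
    have : t = s := by push_cast at hle; linarith
    subst this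
    rw [hθ_init t hs ht1, hη_init t hs ht1]
  | succ n ih =>
    intro s t hs hst ht1 hle x
    rcases eq_or_lt_of_le hst with h | h
    · subst h
      rw [hθ_init s hs ht1, hη_init s hs ht1]
    · rcases le_or_gt (t - s) τstar with hsmall | hbig
      · have h1 : φθ s t x = φη s t x := by
          have := ha x s t (t - s) hs h ht1 (by linarith) (le_min hsmall le_rfl)
          simpa using this
        exact h1
      · have hu0 : 0 ≤ t - τstar := by linarith
        have hsu : s ≤ t - τstar := by linarith
        have hu1 : t - τstar ≤ 1 := by linarith
        have hbb := hb x s t τstar hs h ht1 hτstar (le_min le_rfl (by linarith))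
        rw [hbb]
        have hprev : φθ s (t - τstar) x = φη s (t - τstar) x := by
          refine ih s (t - τstar) hs hsu hu1 ?_ x
          push_cast at hle ⊢; linarith
        rw [hprev]
        have hlast : φθ (t - τstar) t (φη s (t - τstar) x)
            = φη (t - τstar) t (φη s (t - τstar) x) := by
          have := ha (φη s (t - τstar) x) (t - τstar) t τstar hu0 (by linarith) ht1
            hτstar (le_min le_rfl (by linarith))
          simpa using this
        rw [hlast]
        exact hη_cons s (t - τstar) t hs hsu (by linarith) ht1 x
end

section
/- Let d be a positive integer. Let v^η : [0,1] × ℝ^d → ℝ^d and let v^θ : {(s,t) : 0 ≤ s ≤ t ≤ 1} × ℝ^d → ℝ^d be jointly continuous. Define φ^θ_{s,t}(x) = x + (t−s)·v^θ_{s,t}(x). Assume: (A) v^θ_{t,t}(x) = v^η_t(x) for all t ∈ [0,1] and x ∈ ℝ^d, and (B) there exists τ* > 0 such that φ^θ_{s,t}(x) = φ^θ_{t−τ,t}(φ^θ_{s,t−τ}(x)) for all x ∈ ℝ^d, all 0 ≤ s < t ≤ 1, and all τ with 0 < τ ≤ min{τ*, t−s}. Then φ^θ satisfies the Lagrangian PDE: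 for every 0 ≤ s < t ≤ 1 and x ∈ ℝ^d, the map u ↦ φ^θ_{s,u}(x) defined on [s,1] is differentiable at u = t within [s,1] with derivative equal to v^η_t(φ^θ_{s,t}(x)). -/
/-- Lemma 2: if the average velocity model `vθ` matches the teacher velocity `vη` on the
diagonal and the induced TTFM `φθ` satisfies short-interval consistency, then `φθ`
satisfies the Lagrangian PDE: the partial derivative of `φθ s t x` in the terminal time
`t` (within `[s, 1]`) equals `vη t (φθ s t x)`. -/
theorem stmt_1 (d : ℕ) (hd : 0 < d)
    (vη : ℝ → (Fin d → ℝ) → (Fin d → ℝ))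
    (vθ : ℝ → ℝ → (Fin d → ℝ) → (Fin d → ℝ))
    (hvη_cont : ContinuousOn (fun q : ℝ × (Fin d → ℝ) => vη q.1 q.2)
      ((Set.Icc (0 : ℝ) 1) ×ˢ (Set.univ : Set (Fin d → ℝ))))
    (hvθ_cont : ContinuousOn (fun q : ℝ × ℝ × (Fin d → ℝ) => vθ q.1 q.2.1 q.2.2)
      {q : ℝ × ℝ × (Fin d → ℝ) | 0 ≤ q.1 ∧ q.1 ≤ q.2.1 ∧ q.2.1 ≤ 1})
    (φθ : ℝ → ℝ → (Fin d → ℝ) → (Fin d → ℝ))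
    (hφθ : ∀ (s t : ℝ) (x : Fin d → ℝ), φθ s t x = x + (t - s) • vθ s t x)
    (hA : ∀ t : ℝ, 0 ≤ t → t ≤ 1 → ∀ x : Fin d → ℝ, vθ t t x = vη t x)
    (τstar : ℝ) (hτstar : 0 < τstar)
    (hB : ∀ (x : Fin d → ℝ) (s t τ : ℝ), 0 ≤ s → s < t → t ≤ 1 →
      0 < τ → τ ≤ min τstar (t - s) → φθ s t x = φθ (t - τ) t (φθ s (t - τ) x)) :
    ∀ (s t : ℝ), 0 ≤ s → s < t → t ≤ 1 → ∀ x : Fin d → ℝ,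
      HasDerivWithinAt (fun u : ℝ => φθ s u x) (vη t (φθ s t x)) (Set.Icc s 1) t := by
  intro s t hs hst ht1 x
  have hs0t : (0:ℝ) ≤ t := le_trans hs hst.le
  set y := φθ s t x with hy
  have hyv : vθ t t y = vη t y := hA t hs0t ht1 y
  rw [hasDerivWithinAt_iff_tendsto_slope]
  set S := {q : ℝ × ℝ × (Fin d → ℝ) | 0 ≤ q.1 ∧ q.1 ≤ q.2.1 ∧ q.2.1 ≤ 1} with hS
  have hmemS : ((t, t, y) : ℝ × ℝ × (Fin d → ℝ)) ∈ S := ⟨hs0t, le_refl t, ht1⟩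
  have hcw := hvθ_cont (t, t, y) hmemS
  -- right-side limit function
  have hR : Filter.Tendsto (fun u => vθ t u y) (nhdsWithin t (Set.Ioc t 1)) (nhds (vη t y)) := by
    have hmap : Filter.Tendsto (fun u : ℝ => ((t, u, y) : ℝ × ℝ × (Fin d → ℝ)))
        (nhdsWithin t (Set.Ioc t 1)) (nhdsWithin (t, t, y) S) := by
      rw [tendsto_nhdsWithin_iff]
      refine ⟨((continuous_const.prodMk (continuous_id.prodMk continuous_const)).tendsto t).mono_left
          nhdsWithin_le_nhds, ?_⟩
      filter_upwards [eventually_mem_nhdsWithin] with u hu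
      exact ⟨hs0t, hu.1.le, hu.2⟩
    have h := hcw.tendsto.comp hmap
    rw [← hyv]; exact h
  -- continuity of u ↦ φθ s u x from the left
  have hφcont : Filter.Tendsto (fun u : ℝ => φθ s u x) (nhdsWithin t (Set.Ico s t)) (nhds y) := by
    have hmem : ((s, t, x) : ℝ × ℝ × (Fin d → ℝ)) ∈ S := ⟨hs, hst.le, ht1⟩
    have hcw2 := hvθ_cont (s, t, x) hmem
    have hmap : Filter.Tendsto (fun u : ℝ => ((s, u, x) : ℝ × ℝ × (Fin d → ℝ)))
        (nhdsWithin t (Set.Ico s t)) (nhdsWithin (s, t, x) S) := by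
      rw [tendsto_nhdsWithin_iff]
      refine ⟨((continuous_const.prodMk (continuous_id.prodMk continuous_const)).tendsto t).mono_left
          nhdsWithin_le_nhds, ?_⟩
      filter_upwards [eventually_mem_nhdsWithin] with u hu
      exact ⟨hs, hu.1, hu.2.le.trans ht1⟩
    have hv : Filter.Tendsto (fun u : ℝ => vθ s u x) (nhdsWithin t (Set.Ico s t))
        (nhds (vθ s t x)) := hcw2.tendsto.comp hmap
    have hmain : Filter.Tendsto (fun u : ℝ => x + (u - s) • vθ s u x) (nhdsWithin t (Set.Ico s t))
        (nhds (x + (t - s) • vθ s t x)) :=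
      Filter.Tendsto.add tendsto_const_nhds
        (Filter.Tendsto.smul
          (Filter.Tendsto.sub_const (((continuous_id.tendsto t).mono_left nhdsWithin_le_nhds)) s) hv)
    have heq : (fun u : ℝ => φθ s u x) = fun u : ℝ => x + (u - s) • vθ s u x :=
      funext fun u => hφθ s u x
    rw [heq, hy, hφθ s t x]; exact hmain
  -- left-side limit function
  have hL : Filter.Tendsto (fun u => vθ u t (φθ s u x)) (nhdsWithin t (Set.Ico s t))
      (nhds (vη t y)) := by
    have hmap : Filter.Tendsto (fun u : ℝ => ((u, t, φθ s u x) : ℝ × ℝ × (Fin d → ℝ)))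
        (nhdsWithin t (Set.Ico s t)) (nhdsWithin (t, t, y) S) := by
      rw [tendsto_nhdsWithin_iff]
      constructor
      · exact Filter.Tendsto.prodMk_nhds (((continuous_id.tendsto t).mono_left nhdsWithin_le_nhds))
          (Filter.Tendsto.prodMk_nhds tendsto_const_nhds hφcont)
      · filter_upwards [eventually_mem_nhdsWithin] with u hu
        exact ⟨hs.trans hu.1, hu.2.le, ht1⟩
    have h := hcw.tendsto.comp hmap
    rw [← hyv]; exact h
  -- combine
  have hsub : Set.Icc s 1 \ {t} ⊆ Set.Ioc t 1 ∪ Set.Ico s t := by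
    rintro u ⟨⟨hu1, hu2⟩, hu3⟩
    rcases lt_or_gt_of_ne (fun h => hu3 h) with h | h
    · exact Or.inr ⟨hu1, h⟩
    · exact Or.inl ⟨h, hu2⟩
  refine Filter.Tendsto.mono_left ?_ (nhdsWithin_mono t hsub)
  rw [nhdsWithin_union, Filter.tendsto_sup]
  have hτev : ∀ᶠ u in nhds t, |u - t| < τstar := by
    have := Metric.ball_mem_nhds t hτstar
    filter_upwards [this] with u hu
    simpa [Real.dist_eq] using hu
  constructor
  · -- right piece
    refine hR.congr' ?_
    filter_upwards [eventually_mem_nhdsWithin, hτev.filter_mono nhdsWithin_le_nhds] with u hu hτ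
    have htu : t < u := hu.1
    have hne : u - t ≠ 0 := sub_ne_zero.mpr htu.ne'
    have hτle : u - t ≤ min τstar (u - s) := by
      refine le_min ?_ ?_
      · have : |u - t| = u - t := abs_of_pos (sub_pos.mpr htu)
        linarith [this ▸ hτ]
      · linarith
    have hcons := hB x s u (u - t) hs (hst.trans htu) hu.2 (sub_pos.mpr htu) hτle
    have hut : u - (u - t) = t := by ring
    rw [hut] at hcons
    have hstep : φθ s u x - φθ s t x = (u - t) • vθ t u y := by
      rw [hcons, hφθ t u y, hy]; abel
    simp only [slope_def_module]
    rw [hstep, smul_smul, inv_mul_cancel₀ hne, one_smul]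
  · -- left piece
    refine hL.congr' ?_
    filter_upwards [eventually_mem_nhdsWithin, hτev.filter_mono nhdsWithin_le_nhds] with u hu hτ
    have hut : u < t := hu.2
    have hne : u - t ≠ 0 := sub_ne_zero.mpr hut.ne
    have hτle : t - u ≤ min τstar (t - s) := by
      refine le_min ?_ ?_
      · have : |u - t| = t - u := by rw [abs_sub_comm]; exact abs_of_pos (sub_pos.mpr hut)
        linarith [this ▸ hτ]
      · linarith [hu.1]
    have hcons := hB x s t (t - u) hs hst ht1 (sub_pos.mpr hut) hτle
    have htu : t - (t - u) = u := by ring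
    rw [htu] at hcons
    have hstep : φθ s u x - φθ s t x = (u - t) • vθ u t (φθ s u x) := by
      rw [hcons, hφθ u t (φθ s u x)]
      rw [show (u - t : ℝ) = -(t - u) by ring, neg_smul]
      abel
    simp only [slope_def_module]
    rw [hstep, smul_smul, inv_mul_cancel₀ hne, one_smul]
end

section
/- Let d and N be positive integers and set τ = 1/N. Let v^θ : {(s,t) : 0 ≤ s ≤ t ≤ 1} × ℝ^d → ℝ^d be jointly continuous and define φ^θ_{s,t}(x) = x + (t−s)·v^θ_{s,t}(x). For each s ∈ [0, 1−τ] let S_s : ℝ^d → ℝ^d be continuous (the one-step ODE solver map carrying time s to time s+τ), and for each s ∈ [0, 1−τ] let p_s be a Borel probability measure on ℝ^d with full support (every nonempty open set has positive measure). Assume: (IAVM) for every s ∈ [0, 1−τ], ∫_{ℝ^d} ‖v^θ_{s,s+τ}(x) − (S_s(x) − x)/τ‖² dp_s(x) = 0; and (TVM) for every s ∈ [0, 1−τ], ∫_{s+τ}^{1} ∫_{ℝ^d} ‖(φ^θ_{s,t}(x) − φ^θ_{s,t−τ}(x))/τ − v^θ_{t−τ,t}(φ^θ_{s,t−τ}(x))‖²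 dp_s(x) dt = 0. Then for all integers m, n with 0 ≤ m ≤ n ≤ N and all x ∈ ℝ^d, φ^θ_{mτ, nτ}(x) = (S_{(n−1)τ} ∘ S_{(n−2)τ} ∘ ⋯ ∘ S_{mτ})(x), where the empty composition (case m = n) is the identity map. -/
open MeasureTheory

lemma lintegral_pos_of_ge_on_open {X : Type*} [TopologicalSpace X] [MeasurableSpace X]
    [OpensMeasurableSpace X] (μ : Measure X)
    (hμ : ∀ U : Set X, IsOpen U → U.Nonempty → 0 < μ U)
    {f : X → ENNReal} {c : ENNReal} {U : Set X} (hU : IsOpen U) (hUne : U.Nonempty)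
    (hc : c ≠ 0) (hf : ∀ x ∈ U, c ≤ f x) : 0 < ∫⁻ x, f x ∂μ := by
  have h1 : ∫⁻ x, U.indicator (fun _ => c) x ∂μ ≤ ∫⁻ x, f x ∂μ := by
    refine lintegral_mono fun x => ?_
    by_cases hx : x ∈ U
    · simpa [Set.indicator_of_mem hx] using hf x hx
    · simp [Set.indicator_of_notMem hx]
  rw [lintegral_indicator hU.measurableSet, setLIntegral_const] at h1
  exact lt_of_lt_of_le (ENNReal.mul_pos hc (hμ U hU hUne).ne') h1

lemma sq_zero_of_lintegral_zero {X : Type*} [TopologicalSpace X] [MeasurableSpace X]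
    [OpensMeasurableSpace X] (μ : Measure X)
    (hμ : ∀ U : Set X, IsOpen U → U.Nonempty → 0 < μ U)
    {g : X → ℝ} (hg : Continuous g)
    (h : ∫⁻ x, ENNReal.ofReal (g x ^ 2) ∂μ = 0) : ∀ x, g x = 0 := by
  intro x₀
  by_contra hx₀
  have hpos : 0 < g x₀ ^ 2 := by positivity
  set U : Set X := {x | g x₀ ^ 2 / 2 < g x ^ 2} with hUdef
  have hUopen : IsOpen U := isOpen_lt continuous_const ((hg.pow 2))
  have hUne : U.Nonempty := ⟨x₀, by simp [hUdef]; linarith⟩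
  have := lintegral_pos_of_ge_on_open μ hμ hUopen hUne
    (c := ENNReal.ofReal (g x₀ ^ 2 / 2)) (by simp [ENNReal.ofReal_pos]; linarith)
    (fun x hx => ENNReal.ofReal_le_ofReal (le_of_lt hx))
  rw [h] at this
  exact lt_irrefl 0 this

lemma sq_zero_of_double_lintegral_zero {X : Type*} [TopologicalSpace X] [MeasurableSpace X]
    [OpensMeasurableSpace X] (μ : Measure X)
    (hμ : ∀ U : Set X, IsOpen U → U.Nonempty → 0 < μ U)
    {a b : ℝ} (hab : a < b) {g : ℝ × X → ℝ}
    (hg : ContinuousOn g (Set.Icc a b ×ˢ (Set.univ : Set X)))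
    (h : ∫⁻ t in Set.Icc a b, ∫⁻ x, ENNReal.ofReal (g (t, x) ^ 2) ∂μ = 0)
    {t₀ : ℝ} (ht₀ : t₀ ∈ Set.Icc a b) (x₀ : X) : g (t₀, x₀) = 0 := by
  by_contra hx₀
  have hpos : 0 < g (t₀, x₀) ^ 2 := by positivity
  set c : ℝ := g (t₀, x₀) ^ 2 / 2 with hc
  -- continuity within gives a product neighborhood where g^2 > c
  have hT : (t₀, x₀) ∈ Set.Icc a b ×ˢ (Set.univ : Set X) := ⟨ht₀, trivial⟩
  have hcw : ContinuousWithinAt (fun q => g q ^ 2) (Set.Icc a b ×ˢ (Set.univ : Set X)) (t₀, x₀) :=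
    ((hg (t₀, x₀) hT).pow 2)
  have hev : ∀ᶠ q in nhdsWithin (t₀, x₀) (Set.Icc a b ×ˢ (Set.univ : Set X)),
      c < g q ^ 2 := hcw.eventually_const_lt (by rw [hc]; linarith)
  rw [eventually_nhdsWithin_iff] at hev
  rw [Filter.eventually_iff_exists_mem] at hev
  obtain ⟨V, hV, hVsub⟩ := hev
  rw [mem_nhds_prod_iff] at hV
  obtain ⟨u, hu, v, hv, huv⟩ := hV
  obtain ⟨δ, hδ, hball⟩ := Metric.mem_nhds_iff.mp hu
  obtain ⟨U, hUsub, hUopen, hx₀U⟩ := mem_nhds_iff.mp hv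
  set A := max a (t₀ - δ/2) with hA
  set B := min b (t₀ + δ/2) with hB
  have hAB : A < B := by
    have h1 := ht₀.1; have h2 := ht₀.2
    apply max_lt <;> apply lt_min <;> linarith
  have hμU : 0 < μ U := hμ U hUopen ⟨x₀, hx₀U⟩
  have hcpos : (0:ENNReal) < ENNReal.ofReal c := by
    rw [ENNReal.ofReal_pos]; rw [hc]; linarith
  have key : ∀ t ∈ Set.Ioo A B,
      ENNReal.ofReal c * μ U ≤ ∫⁻ x, ENNReal.ofReal (g (t, x) ^ 2) ∂μ := by
    intro t ht
    have htmem : t ∈ Set.Icc a b :=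
      ⟨le_trans (le_max_left _ _) ht.1.le, le_trans ht.2.le (min_le_left _ _)⟩
    have htball : t ∈ u := by
      apply hball
      rw [Metric.mem_ball, Real.dist_eq, abs_lt]
      have h1 : t₀ - δ/2 ≤ A := le_max_right _ _
      have h2 : B ≤ t₀ + δ/2 := min_le_right _ _
      have h3 := ht.1; have h4 := ht.2
      constructor <;> linarith
    have h1 : ∫⁻ x, U.indicator (fun _ => ENNReal.ofReal c) x ∂μ
        ≤ ∫⁻ x, ENNReal.ofReal (g (t, x) ^ 2) ∂μ := by
      refine lintegral_mono fun x => ?_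
      by_cases hx : x ∈ U
      · rw [Set.indicator_of_mem hx]
        refine ENNReal.ofReal_le_ofReal (le_of_lt ?_)
        exact hVsub (t, x) (huv ⟨htball, hUsub hx⟩) ⟨htmem, trivial⟩
      · simp [Set.indicator_of_notMem hx]
    rwa [lintegral_indicator hUopen.measurableSet, setLIntegral_const] at h1
  have hout : (ENNReal.ofReal c * μ U) * volume (Set.Ioo A B)
      ≤ ∫⁻ t in Set.Icc a b, ∫⁻ x, ENNReal.ofReal (g (t, x) ^ 2) ∂μ := by
    have h1 : ∫⁻ t in Set.Icc a b,
        (Set.Ioo A B).indicator (fun _ => ENNReal.ofReal c * μ U) t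
        ≤ ∫⁻ t in Set.Icc a b, ∫⁻ x, ENNReal.ofReal (g (t, x) ^ 2) ∂μ := by
      refine lintegral_mono fun t => ?_
      by_cases htt : t ∈ Set.Ioo A B
      · rw [Set.indicator_of_mem htt]; exact key t htt
      · simp [Set.indicator_of_notMem htt]
    rw [lintegral_indicator measurableSet_Ioo, setLIntegral_const,
      Measure.restrict_apply measurableSet_Ioo] at h1
    have hinter : Set.Ioo A B ∩ Set.Icc a b = Set.Ioo A B := by
      apply Set.inter_eq_left.mpr
      intro t ht
      exact ⟨le_trans (le_max_left _ _) ht.1.le, le_trans ht.2.le (min_le_left _ _)⟩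
    rwa [hinter] at h1
  rw [h] at hout
  have hvol : 0 < volume (Set.Ioo A B) := by
    rw [Real.volume_Ioo, ENNReal.ofReal_pos]; linarith
  have : (0:ENNReal) < (ENNReal.ofReal c * μ U) * volume (Set.Ioo A B) :=
    ENNReal.mul_pos (ENNReal.mul_pos hcpos.ne' hμU.ne').ne' hvol.ne'
  exact absurd (le_antisymm hout (le_of_lt this)) this.ne'


/-- `solverComp S τ m k x` is the composition `S_{(m+k−1)τ} ∘ ⋯ ∘ S_{(m+1)τ} ∘ S_{mτ}`
applied to `x` (the empty composition, `k = 0`, is the identity). -/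
def solverComp {d : ℕ} (S : ℝ → (Fin d → ℝ) → (Fin d → ℝ)) (τ : ℝ) (m : ℕ) :
    ℕ → (Fin d → ℝ) → (Fin d → ℝ)
  | 0, x => x
  | k + 1, x => S (((m : ℝ) + k) * τ) (solverComp S τ m k x)

/-- Theorem 3: if the IAVM and TVM losses of the (EMA-stabilized) model vanish, then the
trained TTFM `φθ` simulates the one-step ODE solver on multiples of `τ = 1/N` in a single
function evaluation. -/
theorem stmt_2 (d N : ℕ) (hd : 0 < d) (hN : 0 < N) (τ : ℝ) (hτ : τ = 1 / N)
    (vθ : ℝ → ℝ → (Fin d → ℝ) → (Fin d → ℝ))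
    (hvθ_cont : ContinuousOn (fun q : ℝ × ℝ × (Fin d → ℝ) => vθ q.1 q.2.1 q.2.2)
      {q : ℝ × ℝ × (Fin d → ℝ) | 0 ≤ q.1 ∧ q.1 ≤ q.2.1 ∧ q.2.1 ≤ 1})
    (φθ : ℝ → ℝ → (Fin d → ℝ) → (Fin d → ℝ))
    (hφθ : ∀ (s t : ℝ) (x : Fin d → ℝ), φθ s t x = x + (t - s) • vθ s t x)
    (S : ℝ → (Fin d → ℝ) → (Fin d → ℝ))
    (hS_cont : ∀ s : ℝ, s ∈ Set.Icc (0 : ℝ) (1 - τ) → Continuous (S s))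
    (p : ℝ → Measure (Fin d → ℝ))
    (hp_prob : ∀ s : ℝ, s ∈ Set.Icc (0 : ℝ) (1 - τ) → IsProbabilityMeasure (p s))
    (hp_pos : ∀ s : ℝ, s ∈ Set.Icc (0 : ℝ) (1 - τ) →
      ∀ U : Set (Fin d → ℝ), IsOpen U → U.Nonempty → 0 < p s U)
    (hIAVM : ∀ s : ℝ, s ∈ Set.Icc (0 : ℝ) (1 - τ) →
      ∫⁻ x, ENNReal.ofReal (‖vθ s (s + τ) x - τ⁻¹ • (S s x - x)‖ ^ 2) ∂(p s) = 0)
    (hTVM : ∀ s : ℝ, s ∈ Set.Icc (0 : ℝ) (1 - τ) →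
      ∫⁻ t in Set.Icc (s + τ) 1,
        ∫⁻ x, ENNReal.ofReal
          (‖τ⁻¹ • (φθ s t x - φθ s (t - τ) x) - vθ (t - τ) t (φθ s (t - τ) x)‖ ^ 2)
          ∂(p s) = 0) :
    ∀ m n : ℕ, m ≤ n → n ≤ N → ∀ x : Fin d → ℝ,
      φθ ((m : ℝ) * τ) ((n : ℝ) * τ) x = solverComp S τ m (n - m) x := by
  have hτpos : 0 < τ := by rw [hτ]; positivity
  have hτne : τ ≠ 0 := hτpos.ne'
  have hNτ : (N : ℝ) * τ = 1 := by
    rw [hτ]; field_simp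
  have hle1 : ∀ a : ℕ, a ≤ N → (a : ℝ) * τ ≤ 1 := by
    intro a ha
    rw [← hNτ]
    exact mul_le_mul_of_nonneg_right (by exact_mod_cast ha) hτpos.le
  have hlt1 : ∀ a : ℕ, a < N → (a : ℝ) * τ < 1 := by
    intro a ha
    rw [← hNτ]
    exact mul_lt_mul_of_pos_right (by exact_mod_cast ha) hτpos
  -- membership of grid points
  have hmem : ∀ j : ℕ, j + 1 ≤ N → ((j : ℝ) * τ) ∈ Set.Icc (0 : ℝ) (1 - τ) := by
    intro j hj
    constructor
    · positivity
    · have : ((j : ℝ) + 1) * τ ≤ 1 := by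
        have := hle1 (j + 1) hj
        push_cast at this
        linarith
      nlinarith
  -- Step 1: pointwise IAVM
  have onestep : ∀ j : ℕ, j + 1 ≤ N → ∀ y : Fin d → ℝ,
      φθ ((j : ℝ) * τ) ((j : ℝ) * τ + τ) y = S ((j : ℝ) * τ) y := by
    intro j hj y
    set s := (j : ℝ) * τ with hs
    have hsmem := hmem j hj
    have hcontv : Continuous (fun x : Fin d → ℝ => vθ s (s + τ) x) := by
      have hf : Continuous (fun x : Fin d → ℝ => ((s, s + τ, x) : ℝ × ℝ × (Fin d → ℝ))) := by
        fun_prop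
      exact hvθ_cont.comp_continuous hf fun x =>
        ⟨hsmem.1, by simp only [Set.mem_setOf_eq]; constructor <;> [linarith; linarith [hsmem.2]]⟩
    have hcontg : Continuous (fun x : Fin d → ℝ =>
        ‖vθ s (s + τ) x - τ⁻¹ • (S s x - x)‖) :=
      (hcontv.sub (((hS_cont s hsmem).sub continuous_id).const_smul τ⁻¹)).norm
    have hzero := sq_zero_of_lintegral_zero (p s) (hp_pos s hsmem) hcontg (hIAVM s hsmem) y
    have heq : vθ s (s + τ) y = τ⁻¹ • (S s y - y) := by
      have := norm_eq_zero.mp hzero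
      exact sub_eq_zero.mp this
    rw [hφθ, heq, show s + τ - s = τ by ring, smul_smul, mul_inv_cancel₀ hτne, one_smul]
    abel
  -- Step 2: pointwise TVM
  have tvmstep : ∀ s : ℝ, s ∈ Set.Icc (0 : ℝ) (1 - τ) → s + τ < 1 →
      ∀ t ∈ Set.Icc (s + τ) 1, ∀ x : Fin d → ℝ,
      φθ s t x = φθ s (t - τ) x + τ • vθ (t - τ) t (φθ s (t - τ) x) := by
    intro s hs hlt t ht x
    have hs0 : 0 ≤ s := hs.1
    -- continuity of the TVM integrand on Icc (s+τ) 1 ×ˢ univ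
    set T : Set (ℝ × (Fin d → ℝ)) := Set.Icc (s + τ) 1 ×ˢ Set.univ with hT
    have hv1 : ContinuousOn (fun q : ℝ × (Fin d → ℝ) => vθ s q.1 q.2) T := by
      have hf : ContinuousOn (fun q : ℝ × (Fin d → ℝ) =>
          ((s, q.1, q.2) : ℝ × ℝ × (Fin d → ℝ))) T := by fun_prop
      refine ContinuousOn.comp hvθ_cont hf ?_
      intro q hq
      show 0 ≤ s ∧ s ≤ q.1 ∧ q.1 ≤ 1
      exact ⟨hs0, by linarith [hq.1.1], hq.1.2⟩
    have hv2 : ContinuousOn (fun q : ℝ × (Fin d → ℝ) => vθ s (q.1 - τ) q.2) T := by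
      have hf : ContinuousOn (fun q : ℝ × (Fin d → ℝ) =>
          ((s, q.1 - τ, q.2) : ℝ × ℝ × (Fin d → ℝ))) T := by fun_prop
      refine ContinuousOn.comp hvθ_cont hf ?_
      intro q hq
      show 0 ≤ s ∧ s ≤ q.1 - τ ∧ q.1 - τ ≤ 1
      exact ⟨hs0, by linarith [hq.1.1], by linarith [hq.1.2, hτpos]⟩
    have hφ1 : ContinuousOn (fun q : ℝ × (Fin d → ℝ) => φθ s q.1 q.2) T := by
      simp only [hφθ]
      exact continuousOn_snd.add ((continuousOn_fst.sub continuousOn_const).smul hv1)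
    have hφ2 : ContinuousOn (fun q : ℝ × (Fin d → ℝ) => φθ s (q.1 - τ) q.2) T := by
      simp only [hφθ]
      exact continuousOn_snd.add
        (((continuousOn_fst.sub continuousOn_const).sub continuousOn_const).smul hv2)
    have hv3 : ContinuousOn
        (fun q : ℝ × (Fin d → ℝ) => vθ (q.1 - τ) q.1 (φθ s (q.1 - τ) q.2)) T := by
      have hf : ContinuousOn (fun q : ℝ × (Fin d → ℝ) =>
          ((q.1 - τ, q.1, φθ s (q.1 - τ) q.2) : ℝ × ℝ × (Fin d → ℝ))) T :=
        (continuousOn_fst.sub continuousOn_const).prodMk (continuousOn_fst.prodMk hφ2)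
      refine ContinuousOn.comp hvθ_cont hf ?_
      intro q hq
      show 0 ≤ q.1 - τ ∧ q.1 - τ ≤ q.1 ∧ q.1 ≤ 1
      exact ⟨by linarith [hq.1.1], by linarith [hτpos.le], hq.1.2⟩
    have hgcont : ContinuousOn (fun q : ℝ × (Fin d → ℝ) =>
        ‖τ⁻¹ • (φθ s q.1 q.2 - φθ s (q.1 - τ) q.2)
          - vθ (q.1 - τ) q.1 (φθ s (q.1 - τ) q.2)‖) T :=
      (((hφ1.sub hφ2).const_smul τ⁻¹).sub hv3).norm
    have hzero := sq_zero_of_double_lintegral_zero (p s) (hp_pos s hs) hlt hgcont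
      (hTVM s hs) ht x
    have heq : τ⁻¹ • (φθ s t x - φθ s (t - τ) x) = vθ (t - τ) t (φθ s (t - τ) x) := by
      have := norm_eq_zero.mp hzero
      exact sub_eq_zero.mp this
    have h2 : φθ s t x - φθ s (t - τ) x = τ • vθ (t - τ) t (φθ s (t - τ) x) := by
      rw [← heq, smul_smul, mul_inv_cancel₀ hτne, one_smul]
    have := congrArg (fun z => φθ s (t - τ) x + z) h2
    simpa using this
  -- Step 3: induction
  have main : ∀ k m : ℕ, m + k ≤ N → ∀ x : Fin d → ℝ,
      φθ ((m : ℝ) * τ) (((m + k : ℕ) : ℝ) * τ) x = solverComp S τ m k x := by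
    intro k
    induction k with
    | zero =>
      intro m h x
      simp only [Nat.add_zero, solverComp, hφθ]
      simp
    | succ k ih =>
      intro m h x
      rcases Nat.eq_zero_or_pos k with hk | hk
      · subst hk
        have h1 := onestep m (by omega) x
        simp only [solverComp]
        have e1 : ((m + 1 : ℕ) : ℝ) * τ = (m : ℝ) * τ + τ := by push_cast; ring
        have e2 : ((m : ℝ) + (0 : ℕ)) * τ = (m : ℝ) * τ := by push_cast; ring
        rw [e1, e2, h1]
      · have hsmem : ((m : ℝ) * τ) ∈ Set.Icc (0 : ℝ) (1 - τ) := hmem m (by omega)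
        have hlt : (m : ℝ) * τ + τ < 1 := by
          have : ((m + 1 : ℕ) : ℝ) * τ < 1 := hlt1 (m + 1) (by omega)
          push_cast at this
          linarith
        have htmem : (((m + (k + 1) : ℕ) : ℝ) * τ) ∈ Set.Icc ((m : ℝ) * τ + τ) 1 := by
          constructor
          · have : ((m : ℝ) + 1) * τ ≤ ((m + (k + 1) : ℕ) : ℝ) * τ := by
              apply mul_le_mul_of_nonneg_right _ hτpos.le
              push_cast
              linarith [Nat.cast_nonneg (α := ℝ) k]
            push_cast at this ⊢
            linarith
          · exact hle1 _ h
        have hstep := tvmstep ((m : ℝ) * τ) hsmem hlt _ htmem x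
        have htsub : ((m + (k + 1) : ℕ) : ℝ) * τ - τ = ((m + k : ℕ) : ℝ) * τ := by
          push_cast; ring
        rw [htsub, ih m (by omega) x] at hstep
        have hone := onestep (m + k) (by omega) (solverComp S τ m k x)
        rw [hφθ] at hone
        have harg : ((m + k : ℕ) : ℝ) * τ + τ = ((m + (k + 1) : ℕ) : ℝ) * τ := by
          push_cast; ring
        rw [harg] at hone
        have hsub2 : ((m + (k + 1) : ℕ) : ℝ) * τ - ((m + k : ℕ) : ℝ) * τ = τ := by
          push_cast; ring
        rw [hsub2] at hone
        simp only [solverComp]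
        rw [hstep, hone]
        congr 1
        push_cast
        ring
  intro m n hmn hnN x
  obtain ⟨k, rfl⟩ := Nat.exists_eq_add_of_le hmn
  rw [Nat.add_sub_cancel_left]
  exact main k m hnN x
end

section
/- Let d be a positive integer, τ ∈ (0,1), and s ∈ [0, 1−τ]. Let v : {(a,b) : 0 ≤ a ≤ b ≤ 1} × ℝ^d → ℝ^d be jointly continuous and define φ_{a,b}(x) = x + (b−a)·v_{a,b}(x). Let p be a Borel probability measure on ℝ^d with full support (every nonempty open set has positive measure). If ∫_{s+τ}^{1} ∫_{ℝ^d} ‖(φ_{s,t}(x) − φ_{s,t−τ}(x))/τ − v_{t−τ,t}(φ_{s,t−τ}(x))‖² dp(x) dt = 0, then for every t ∈ [s+τ, 1] and every x ∈ ℝ^d, φ_{s,t}(x) = φ_{t−τ,t}(φ_{s,t−τ}(x)). -/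
open MeasureTheory

/-- Vanishing of the terminal velocity matching (TVM) loss forces the pointwise step-τ
consistency property of the two-timed flow model `φ` parameterized by the average
velocity model `v` via `φ a b x = x + (b − a) • v a b x`. -/
theorem stmt_5 (d : ℕ) (hd : 0 < d) (τ : ℝ) (hτ : τ ∈ Set.Ioo (0 : ℝ) 1)
    (s : ℝ) (hs : s ∈ Set.Icc (0 : ℝ) (1 - τ))
    (v : ℝ → ℝ → (Fin d → ℝ) → (Fin d → ℝ))
    (hv_cont : ContinuousOn (fun q : ℝ × ℝ × (Fin d → ℝ) => v q.1 q.2.1 q.2.2)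
      {q : ℝ × ℝ × (Fin d → ℝ) | 0 ≤ q.1 ∧ q.1 ≤ q.2.1 ∧ q.2.1 ≤ 1})
    (φ : ℝ → ℝ → (Fin d → ℝ) → (Fin d → ℝ))
    (hφ : ∀ (a b : ℝ) (x : Fin d → ℝ), φ a b x = x + (b - a) • v a b x)
    (p : Measure (Fin d → ℝ)) [IsProbabilityMeasure p]
    (hp_pos : ∀ U : Set (Fin d → ℝ), IsOpen U → U.Nonempty → 0 < p U)
    (hTVM : ∫⁻ t in Set.Icc (s + τ) 1,
      ∫⁻ x, ENNReal.ofReal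
        (‖τ⁻¹ • (φ s t x - φ s (t - τ) x) - v (t - τ) t (φ s (t - τ) x)‖ ^ 2) ∂p = 0) :
    ∀ t : ℝ, t ∈ Set.Icc (s + τ) 1 → ∀ x : Fin d → ℝ,
      φ s t x = φ (t - τ) t (φ s (t - τ) x) := by
  intro t ht x
  rcases eq_or_lt_of_le ht.1 with hcase | hcase
  · -- trivial endpoint case t = s + τ
    have h1 : t - τ = s := by rw [← hcase]; ring
    have h2 : φ s (t - τ) x = x := by rw [h1, hφ]; simp
    rw [h2, h1]
  · by_contra hne
    have hτ0 : (τ : ℝ) ≠ 0 := ne_of_gt hτ.1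
    set w : Fin d → ℝ :=
      τ⁻¹ • (φ s t x - φ s (t - τ) x) - v (t - τ) t (φ s (t - τ) x) with hw
    have hwne : w ≠ 0 := by
      intro h
      apply hne
      have hv' : v (t - τ) t (φ s (t - τ) x) = τ⁻¹ • (φ s t x - φ s (t - τ) x) :=
        (sub_eq_zero.mp h).symm
      rw [hφ (t - τ) t, hv', smul_smul]
      have ht' : t - (t - τ) = τ := by ring
      rw [ht', mul_inv_cancel₀ hτ0, one_smul]
      abel
    have hc : 0 < ‖w‖ ^ 2 := pow_pos (norm_pos_iff.mpr hwne) 2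
    -- the integrand as an explicit continuous function of (t, x)
    set Fv : ℝ × (Fin d → ℝ) → ℝ := fun q =>
      ‖τ⁻¹ • ((q.2 + (q.1 - s) • v s q.1 q.2)
          - (q.2 + ((q.1 - τ) - s) • v s (q.1 - τ) q.2))
        - v (q.1 - τ) q.1 (q.2 + ((q.1 - τ) - s) • v s (q.1 - τ) q.2)‖ ^ 2 with hFv
    set S : Set (ℝ × (Fin d → ℝ)) := Set.Icc (s + τ) 1 ×ˢ Set.univ with hS
    have hmemS : ∀ q : ℝ × (Fin d → ℝ), q.1 ∈ Set.Icc (s + τ) 1 → q ∈ S := by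
      intro q hq; exact ⟨hq, Set.mem_univ _⟩
    have hcont1 : ContinuousOn (fun q : ℝ × (Fin d → ℝ) => v s q.1 q.2) S := by
      apply hv_cont.comp (by fun_prop : ContinuousOn
        (fun q : ℝ × (Fin d → ℝ) => ((s, q.1, q.2) : ℝ × ℝ × (Fin d → ℝ))) S)
      intro q hq
      obtain ⟨hq1, -⟩ := hq
      exact ⟨hs.1, le_trans (le_add_of_nonneg_right hτ.1.le) hq1.1, hq1.2⟩
    have hcont2 : ContinuousOn (fun q : ℝ × (Fin d → ℝ) => v s (q.1 - τ) q.2) S := by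
      apply hv_cont.comp (by fun_prop : ContinuousOn
        (fun q : ℝ × (Fin d → ℝ) => ((s, q.1 - τ, q.2) : ℝ × ℝ × (Fin d → ℝ))) S)
      intro q hq
      obtain ⟨hq1, -⟩ := hq
      dsimp only [Set.mem_setOf_eq]
      exact ⟨hs.1, by linarith [hq1.1], by linarith [hq1.2, hτ.1]⟩
    have hg : ContinuousOn
        (fun q : ℝ × (Fin d → ℝ) => q.2 + ((q.1 - τ) - s) • v s (q.1 - τ) q.2) S :=
      continuousOn_snd.add (((continuousOn_fst.sub continuousOn_const).sub
        continuousOn_const).smul hcont2)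
    have hcont3 : ContinuousOn (fun q : ℝ × (Fin d → ℝ) =>
        v (q.1 - τ) q.1 (q.2 + ((q.1 - τ) - s) • v s (q.1 - τ) q.2)) S := by
      apply hv_cont.comp (((continuousOn_fst.sub continuousOn_const).prodMk
        (continuousOn_fst.prodMk hg)) : ContinuousOn (fun q : ℝ × (Fin d → ℝ) =>
        ((q.1 - τ, q.1, q.2 + ((q.1 - τ) - s) • v s (q.1 - τ) q.2) :
          ℝ × ℝ × (Fin d → ℝ))) S)
      intro q hq
      obtain ⟨hq1, -⟩ := hq
      dsimp only [Set.mem_setOf_eq, Pi.sub_apply]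
      exact ⟨by linarith [hq1.1, hs.1], by linarith [hτ.1], hq1.2⟩
    have hFcont : ContinuousOn Fv S := by
      apply ContinuousOn.pow
      apply ContinuousOn.norm
      exact ((continuousOn_const (c := τ⁻¹)).smul (((continuousOn_snd.add
        ((continuousOn_fst.sub (continuousOn_const (c := s))).smul hcont1)).sub hg))).sub hcont3
    have hzS : ((t, x) : ℝ × (Fin d → ℝ)) ∈ S := hmemS _ ht
    have hFz : Fv (t, x) = ‖w‖ ^ 2 := by
      rw [hw]; simp only [hFv, hφ]
    -- eventually Fv > ‖w‖²/2 near (t, x) within S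
    have hev : ∀ᶠ q in nhdsWithin (t, x) S, ‖w‖ ^ 2 / 2 < Fv q := by
      have hmem : Set.Ioi (‖w‖ ^ 2 / 2) ∈ nhds (Fv (t, x)) := by
        rw [hFz]; exact Ioi_mem_nhds (by linarith)
      exact hFcont _ hzS hmem
    obtain ⟨U, hUopen, hzU, hU⟩ := mem_nhdsWithin.mp hev
    obtain ⟨ε, hε, hball⟩ := Metric.isOpen_iff.mp hUopen _ hzU
    -- the good region
    set I : Set ℝ := Set.Icc (max (s + τ) (t - ε / 2)) t with hI
    have hlow : max (s + τ) (t - ε / 2) < t := max_lt hcase (by linarith)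
    have hIsub : I ⊆ Set.Icc (s + τ) 1 := by
      intro t' ht'
      exact ⟨le_trans (le_max_left _ _) ht'.1, le_trans ht'.2 ht.2⟩
    have hkey : ∀ t' ∈ I, ∀ x' ∈ Metric.ball x ε,
        ‖w‖ ^ 2 / 2 < Fv (t', x') := by
      intro t' ht' x' hx'
      apply hU
      constructor
      · apply hball
        rw [Metric.mem_ball, Prod.dist_eq]
        apply max_lt _ (Metric.mem_ball.mp hx')
        rw [Real.dist_eq, abs_sub_lt_iff]
        constructor
        · linarith [ht'.2]
        · linarith [ht'.1, le_max_right (s + τ) (t - ε / 2)]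
      · exact hmemS _ (hIsub ht')
    -- lower bound for the inner integral at each t' ∈ I
    have hGlb : ∀ t' ∈ I, ENNReal.ofReal (‖w‖ ^ 2 / 2) * p (Metric.ball x ε) ≤
        ∫⁻ x', ENNReal.ofReal
          (‖τ⁻¹ • (φ s t' x' - φ s (t' - τ) x')
            - v (t' - τ) t' (φ s (t' - τ) x')‖ ^ 2) ∂p := by
      intro t' ht'
      calc ENNReal.ofReal (‖w‖ ^ 2 / 2) * p (Metric.ball x ε)
          = ∫⁻ _ in Metric.ball x ε, ENNReal.ofReal (‖w‖ ^ 2 / 2) ∂p := by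
            rw [setLIntegral_const]
        _ ≤ ∫⁻ x' in Metric.ball x ε, ENNReal.ofReal
              (‖τ⁻¹ • (φ s t' x' - φ s (t' - τ) x')
                - v (t' - τ) t' (φ s (t' - τ) x')‖ ^ 2) ∂p := by
            apply lintegral_mono_ae
            filter_upwards [ae_restrict_mem measurableSet_ball] with x' hx'
            apply ENNReal.ofReal_le_ofReal
            have hlt := hkey t' ht' x' hx'
            have heq : Fv (t', x') = ‖τ⁻¹ • (φ s t' x' - φ s (t' - τ) x')
                - v (t' - τ) t' (φ s (t' - τ) x')‖ ^ 2 := by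
              simp only [hFv, hφ]
            linarith [heq ▸ hlt]
        _ ≤ _ := setLIntegral_le_lintegral _ _
    -- lower bound for the full TVM integral
    have hlb : ENNReal.ofReal (‖w‖ ^ 2 / 2) * p (Metric.ball x ε) * volume I ≤
        ∫⁻ t' in Set.Icc (s + τ) 1, ∫⁻ x', ENNReal.ofReal
          (‖τ⁻¹ • (φ s t' x' - φ s (t' - τ) x')
            - v (t' - τ) t' (φ s (t' - τ) x')‖ ^ 2) ∂p := by
      calc ENNReal.ofReal (‖w‖ ^ 2 / 2) * p (Metric.ball x ε) * volume I
          = ∫⁻ _ in I, ENNReal.ofReal (‖w‖ ^ 2 / 2) * p (Metric.ball x ε) := by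
            rw [setLIntegral_const]
        _ ≤ ∫⁻ t' in I, ∫⁻ x', ENNReal.ofReal
              (‖τ⁻¹ • (φ s t' x' - φ s (t' - τ) x')
                - v (t' - τ) t' (φ s (t' - τ) x')‖ ^ 2) ∂p := by
            apply lintegral_mono_ae
            filter_upwards [ae_restrict_mem measurableSet_Icc] with t' ht'
            exact hGlb t' ht'
        _ ≤ _ := lintegral_mono' (Measure.restrict_mono hIsub le_rfl) fun _ => le_rfl
    rw [hTVM] at hlb
    have h1 : ENNReal.ofReal (‖w‖ ^ 2 / 2) ≠ 0 := by
      simp only [ne_eq, ENNReal.ofReal_eq_zero, not_le]; linarith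
    have h2 : p (Metric.ball x ε) ≠ 0 :=
      (hp_pos _ Metric.isOpen_ball (Metric.nonempty_ball.mpr hε)).ne'
    have h3 : volume I ≠ 0 := by
      rw [hI, Real.volume_Icc]
      simp only [ne_eq, ENNReal.ofReal_eq_zero, not_le]
      linarith
    exact (mul_ne_zero (mul_ne_zero h1 h2) h3) (le_antisymm hlb zero_le)
end

section
/- Let d be a positive integer. Let v : ℝ × ℝ^d → ℝ^d be continuously differentiable and let p : ℝ × ℝ^d → ℝ be continuously differentiable with p(t,x) > 0 for all (t,x). Assume that p and v satisfy the continuity equation: for all (t,x), ∂_t p(t,x) + ⟨∇_x p(t,x), v(t,x)⟩ + p(t,x)·tr(D_x v(t,x)) = 0, where D_x v denotes the Jacobian of v in the spatial variable and tr its trace. Let φ : ℝ → ℝ^d be differentiable with φ'(t) = v(t, φ(t)) for all t. Then for every t, the map t ↦ log p(t, φ(t)) is differentiable with derivative −tr(D_x v(t, φ(t))). -/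
/-- Instantaneous change of variables formula: if a C¹ velocity field `v` and a positive
C¹ density `p` satisfy the continuity equation, then along any trajectory `φ` of the ODE
`φ' t = v t (φ t)`, the log-density `t ↦ log p(t, φ t)` evolves with derivative
`−tr (D_x v (t, φ t))`. -/
theorem stmt_11 (d : ℕ) (hd : 0 < d)
    (v : ℝ → (Fin d → ℝ) → (Fin d → ℝ))
    (p : ℝ → (Fin d → ℝ) → ℝ)
    (hv_diff : ContDiff ℝ 1 (fun q : ℝ × (Fin d → ℝ) => v q.1 q.2))
    (hp_diff : ContDiff ℝ 1 (fun q : ℝ × (Fin d → ℝ) => p q.1 q.2))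
    (hp_pos : ∀ (t : ℝ) (x : Fin d → ℝ), 0 < p t x)
    (hcont_eq : ∀ (t : ℝ) (x : Fin d → ℝ),
      deriv (fun t' : ℝ => p t' x) t
        + (fderiv ℝ (fun x' : Fin d → ℝ => p t x') x) (v t x)
        + p t x * LinearMap.trace ℝ (Fin d → ℝ) (fderiv ℝ (v t) x).toLinearMap = 0)
    (φ : ℝ → (Fin d → ℝ))
    (hφ : ∀ t : ℝ, HasDerivAt φ (v t (φ t)) t) :
    ∀ t : ℝ, HasDerivAt (fun u : ℝ => Real.log (p u (φ u)))
      (-(LinearMap.trace ℝ (Fin d → ℝ) (fderiv ℝ (v t) (φ t)).toLinearMap)) t := by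
  intro t
  set x := φ t with hx
  set F : ℝ × (Fin d → ℝ) → ℝ := fun q => p q.1 q.2 with hF
  have hFd : HasFDerivAt F (fderiv ℝ F (t, x)) (t, x) :=
    (hp_diff.differentiable one_ne_zero (t, x)).hasFDerivAt
  set L := fderiv ℝ F (t, x) with hL
  -- derivative of the curve u ↦ (u, φ u)
  have hcurve : HasDerivAt (fun u : ℝ => (u, φ u)) ((1 : ℝ), v t x) t :=
    HasDerivAt.prodMk (hasDerivAt_id t) (hφ t)
  have hcomp : HasDerivAt (fun u : ℝ => p u (φ u)) (L (1, v t x)) t :=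
    by have := hFd.comp_hasDerivAt t hcurve; exact this
  -- partial derivative in time
  have htime : HasDerivAt (fun t' : ℝ => p t' x) (L (1, 0)) t := by
    have h1 : HasDerivAt (fun t' : ℝ => ((t' : ℝ), x)) ((1 : ℝ), (0 : Fin d → ℝ)) t :=
      HasDerivAt.prodMk (hasDerivAt_id t) (hasDerivAt_const t x)
    exact hFd.comp_hasDerivAt t h1
  -- partial derivative in space
  have hspace : HasFDerivAt (fun x' : Fin d → ℝ => p t x')
      (L.comp (ContinuousLinearMap.inr ℝ ℝ (Fin d → ℝ))) x := by
    have h2 : HasFDerivAt (fun x' : Fin d → ℝ => ((t : ℝ), x'))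
        (ContinuousLinearMap.inr ℝ ℝ (Fin d → ℝ)) x :=
      HasFDerivAt.prodMk (hasFDerivAt_const t x) (hasFDerivAt_id x)
    exact hFd.comp x h2
  have hsum : L (1, v t x) = L (1, 0) + L (0, v t x) := by
    rw [← ContinuousLinearMap.map_add]
    norm_num
  have hcont := hcont_eq t x
  rw [htime.deriv, hspace.fderiv] at hcont
  simp only [ContinuousLinearMap.comp_apply, ContinuousLinearMap.inr_apply] at hcont
  have hpne : p t x ≠ 0 := (hp_pos t x).ne'
  have hval : L (1, v t x) =
      -(p t x * LinearMap.trace ℝ (Fin d → ℝ) (fderiv ℝ (v t) x).toLinearMap) := by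
    rw [hsum]; linarith
  have hlog := hcomp.log hpne
  rw [hval] at hlog
  convert hlog using 1
  rw [← hx]; field_simp
end
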